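/- Let 𝕂 be a field, n ≥ 2, and T = 𝕂[x_1, …, x_{n−1}, w_{ij} : 1 ≤ i, j ≤ n−1] a polynomial ring. Let W = (w_{ij}) be the (n−1)×(n−1) generic matrix, and let I = (f_1, …, f_{n−1}) ⊆ T where f_i = Σ_{j=1}^{n−1} w_{ij} x_j. Then I = (x_1, …, x_{n−1}) ∩ (I + (det W)), both (x_1, …, x_{n−1}) and I + (det W) are prime ideals of T, and the set of minimal primes of I is exactly {(x_1, …, x_{n−1}), I + (det W)}. -/

import Mathlib

open MvPolynomial

set_option linter.unusedSectionVars false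
section KillVars
variable {K : Type*} [CommRing K] [IsDomain K] {σ : Type*} (S : Set σ) [DecidablePred (· ∈ S)]

noncomputable def killVars : MvPolynomial σ K →ₐ[K] MvPolynomial σ K :=
  aeval (fun i => if i ∈ S then 0 else X i)

lemma killVars_X_mem {i : σ} (h : i ∈ S) : killVars (K := K) S (X i) = 0 := by
  simp [killVars, h]

lemma killVars_X_not_mem {i : σ} (h : i ∉ S) : killVars (K := K) S (X i) = X i := by
  simp [killVars, h]

lemma sub_killVars_mem_span (f : MvPolynomial σ K) :
    f - killVars S f ∈ Ideal.span (X '' S) := by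
  induction f using MvPolynomial.induction_on with
  | C a => simp [killVars]
  | add p q hp hq =>
      have : p + q - killVars S (p + q) = (p - killVars S p) + (q - killVars S q) := by
        rw [map_add]; ring
      rw [this]; exact Ideal.add_mem _ hp hq
  | mul_X p i hp =>
      by_cases h : i ∈ S
      · have hXi : (X i : MvPolynomial σ K) ∈ Ideal.span (X '' S) := Ideal.subset_span ⟨i, h, rfl⟩
        rw [map_mul (killVars (K := K) S), killVars_X_mem (K := K) S h, mul_zero, sub_zero]
        exact Ideal.mul_mem_left _ _ hXi
      · rw [map_mul (killVars (K := K) S), killVars_X_not_mem (K := K) S h]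
        have : p * X i - killVars S p * X i = (p - killVars S p) * X i := by ring
        rw [this]
        exact Ideal.mul_mem_right _ _ hp

lemma span_X_eq_ker :
    Ideal.span (X '' S) = RingHom.ker (killVars (K := K) S).toRingHom := by
  apply le_antisymm
  · rw [Ideal.span_le]
    rintro _ ⟨i, hi, rfl⟩
    simp [RingHom.mem_ker, killVars_X_mem S hi]
  · intro f hf
    have h0 : killVars (K := K) S f = 0 := hf
    have := sub_killVars_mem_span S f
    rwa [h0, sub_zero] at this

lemma isPrime_span_X : (Ideal.span (X '' S) : Ideal (MvPolynomial σ K)).IsPrime := by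
  rw [span_X_eq_ker]
  exact RingHom.ker_isPrime _

lemma killVars_eq_zero_of_mem_span {f : MvPolynomial σ K}
    (hf : f ∈ Ideal.span (X '' S)) : killVars S f = 0 := by
  rw [span_X_eq_ker] at hf; exact hf

lemma ahom_det' {K : Type*} [CommRing K] {A B : Type*} [CommRing A] [CommRing B]
    [Algebra K A] [Algebra K B] {p : ℕ} (f : A →ₐ[K] B)
    (M : Matrix (Fin p) (Fin p) A) : f M.det = (M.map f).det := by
  rw [AlgHom.map_det, AlgHom.mapMatrix_apply]

end KillVars

attribute [local instance] Classical.propDecidable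
set_option maxHeartbeats 1000000
set_option synthInstance.maxHeartbeats 400000

namespace StarLSS
open Matrix

noncomputable section
variable (K : Type) [Field K]

abbrev TT := MvPolynomial (ℕ ⊕ ℕ × ℕ) K

def xx (j : ℕ) : TT K := X (Sum.inl j)
def ww (i j : ℕ) : TT K := X (Sum.inr (i, j))
def gg (c i : ℕ) : TT K := ∑ j ∈ Finset.range c, ww K i j * xx K j
def Wm (N : ℕ) : Matrix (Fin N) (Fin N) (TT K) := Matrix.of fun a b => ww K a b
def dd (N : ℕ) : TT K := (Wm K N).det
def II (k c : ℕ) : Ideal (TT K) := Ideal.span (Set.range fun i : Fin k => gg K c i)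
def PP (c : ℕ) : Ideal (TT K) := Ideal.span (Set.range fun j : Fin c => xx K j)
def QQ (N : ℕ) : Ideal (TT K) := II K N N ⊔ Ideal.span {dd K N}

lemma gg_succ (c i : ℕ) : gg K (c+1) i = gg K c i + ww K i c * xx K c := by
  simp [gg, Finset.sum_range_succ]

lemma mem_II_iff {k c : ℕ} {f : TT K} :
    f ∈ II K k c ↔ ∃ a : ℕ → TT K, f = ∑ i ∈ Finset.range k, a i * gg K c i := by
  rw [II, Ideal.mem_span_range_iff_exists_fun]
  constructor
  · rintro ⟨cf, rfl⟩
    refine ⟨fun i => if h : i < k then cf ⟨i, h⟩ else 0, ?_⟩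
    rw [Finset.sum_range fun i => _]
    apply Finset.sum_congr rfl
    intro i _
    simp [i.isLt]
  · rintro ⟨a, rfl⟩
    refine ⟨fun i => a i, ?_⟩
    rw [Finset.sum_range fun i => _]

lemma sum_mem_II {k c : ℕ} (a : ℕ → TT K) :
    (∑ i ∈ Finset.range k, a i * gg K c i) ∈ II K k c :=
  (mem_II_iff K).2 ⟨a, rfl⟩

lemma gg_mem_II {k c i : ℕ} (h : i < k) : gg K c i ∈ II K k c :=
  Ideal.subset_span ⟨⟨i, h⟩, rfl⟩

lemma mem_QQ_iff {N : ℕ} {f : TT K} :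
    f ∈ QQ K N ↔ ∃ (a : ℕ → TT K) (b : TT K),
      f = ∑ i ∈ Finset.range N, a i * gg K N i + b * dd K N := by
  constructor
  · intro hf
    obtain ⟨y, hy, z, hz, rfl⟩ := Submodule.mem_sup.1 hf
    obtain ⟨a, rfl⟩ := (mem_II_iff K).1 hy
    obtain ⟨b, rfl⟩ := Ideal.mem_span_singleton'.1 hz
    exact ⟨a, b, rfl⟩
  · rintro ⟨a, b, rfl⟩
    exact Submodule.add_mem_sup (sum_mem_II K a) (Ideal.mem_span_singleton'.2 ⟨b, rfl⟩)

lemma II_le_QQ (N : ℕ) : II K N N ≤ QQ K N := le_sup_left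

lemma dd_mem_QQ (N : ℕ) : dd K N ∈ QQ K N :=
  Ideal.mem_sup_right (Ideal.mem_span_singleton_self _)

/-- adjugate entries, ℕ-indexed -/
def adjE (n a b : ℕ) : TT K := if h : a < n ∧ b < n then
  (Wm K n).adjugate ⟨a, h.1⟩ ⟨b, h.2⟩ else 0

lemma adjugate_smul_vec {N : ℕ} (v : Fin N → TT K) (j : Fin N) :
    ∑ i : Fin N, (Wm K N).adjugate j i * ((Wm K N) *ᵥ v) i = dd K N * v j := by
  have h : (Wm K N).adjugate *ᵥ ((Wm K N) *ᵥ v) = dd K N • v := by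
    rw [Matrix.mulVec_mulVec, Matrix.adjugate_mul, Matrix.smul_mulVec,
      Matrix.one_mulVec]
    rfl
  have := congrFun h j
  simpa [Matrix.mulVec, dotProduct] using this

lemma mulVec_x (N : ℕ) (a : Fin N) :
    ((Wm K N) *ᵥ (fun b : Fin N => xx K b)) a = gg K N a := by
  simp only [Matrix.mulVec, dotProduct, Wm, Matrix.of_apply]
  rw [gg, Finset.sum_range fun j => _]

lemma mulVec_x_trunc (N : ℕ) (a : Fin (N+1)) :
    ((Wm K (N+1)) *ᵥ (fun b : Fin (N+1) => if (b : ℕ) < N then xx K b else 0)) a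
      = gg K N a := by
  simp only [Matrix.mulVec, dotProduct, Wm, Matrix.of_apply]
  rw [Fin.sum_univ_castSucc]
  simp only [Fin.coe_castSucc, Fin.is_lt, if_true, Fin.val_last, lt_irrefl, if_false,
    mul_zero, add_zero]
  rw [gg, Finset.sum_range fun j => _]

lemma cramer_full (N j : ℕ) (hj : j < N) :
    ∑ i ∈ Finset.range N, adjE K N j i * gg K N i = dd K N * xx K j := by
  have := adjugate_smul_vec K (fun b : Fin N => xx K b) ⟨j, hj⟩
  simp only [mulVec_x] at this
  rw [← this, Finset.sum_range fun i => _]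
  apply Finset.sum_congr rfl
  intro i _
  rw [adjE, dif_pos ⟨hj, i.isLt⟩]

lemma cramer_tall (N j : ℕ) (hj : j < N + 1) :
    ∑ i ∈ Finset.range (N+1), adjE K (N+1) j i * gg K N i
      = dd K (N+1) * (if j < N then xx K j else 0) := by
  have := adjugate_smul_vec K
    (fun b : Fin (N+1) => if (b : ℕ) < N then xx K b else 0) ⟨j, hj⟩
  simp only [mulVec_x_trunc] at this
  rw [← this, Finset.sum_range fun i => _]
  apply Finset.sum_congr rfl
  intro i _
  rw [adjE, dif_pos ⟨hj, i.isLt⟩]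

end

noncomputable section Kill
variable (K : Type) [Field K]

lemma hom_det {S : Type*} [CommRing S] {n : ℕ} (f : TT K →+* S) (M : Matrix (Fin n) (Fin n) (TT K)) :
    f M.det = (M.map f).det := by
  rw [RingHom.map_det, RingHom.mapMatrix_apply]

lemma hom_dd {S : Type*} [CommRing S] (f : TT K →+* S) (n : ℕ) :
    f (dd K n) = Matrix.det (Matrix.of fun a b : Fin n => f (ww K a b)) := by
  rw [dd, hom_det]
  congr 1

lemma ahom_det {S : Type*} [CommRing S] [Algebra K S] {n : ℕ} (f : TT K →ₐ[K] S)
    (M : Matrix (Fin n) (Fin n) (TT K)) : f M.det = (M.map f).det := by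
  rw [AlgHom.map_det, AlgHom.mapMatrix_apply]

def sigmaX (c : ℕ) : TT K →ₐ[K] TT K := killVars {Sum.inl c}

lemma sigmaX_x_self (c : ℕ) : sigmaX K c (xx K c) = 0 := killVars_X_mem _ rfl

lemma sigmaX_x (c j : ℕ) (h : j ≠ c) : sigmaX K c (xx K j) = xx K j :=
  killVars_X_not_mem _ (by simp [h])

lemma sigmaX_w (c i j : ℕ) : sigmaX K c (ww K i j) = ww K i j :=
  killVars_X_not_mem _ (by simp)

lemma sigmaX_gg_self (c i : ℕ) : sigmaX K c (gg K c i) = gg K c i := by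
  rw [gg, map_sum]
  apply Finset.sum_congr rfl
  intro j hj
  rw [_root_.map_mul, sigmaX_w, sigmaX_x]
  exact Nat.ne_of_lt (Finset.mem_range.1 hj)

lemma sigmaX_gg_succ (c i : ℕ) : sigmaX K c (gg K (c+1) i) = gg K c i := by
  rw [gg_succ, map_add, _root_.map_mul, sigmaX_gg_self, sigmaX_x_self, mul_zero, add_zero]

lemma sigmaX_dd (c N : ℕ) : sigmaX K c (dd K N) = dd K N := by
  rw [dd, ahom_det K (sigmaX K c)]
  congr 1
  refine Matrix.ext fun a b => ?_
  simpa [Wm] using sigmaX_w K c a b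

lemma sigmaX_split (c : ℕ) (f : TT K) :
    ∃ f' : TT K, f = sigmaX K c f + xx K c * f' := by
  have h := sub_killVars_mem_span {Sum.inl c} f
  rw [Set.image_singleton] at h
  obtain ⟨a, ha⟩ := Ideal.mem_span_singleton'.1 h
  refine ⟨a, ?_⟩
  have h2 : xx K c * a = f - sigmaX K c f := by rw [mul_comm]; exact ha
  rw [h2]; ring

lemma PP_eq (c : ℕ) : PP K c = Ideal.span (X '' (Sum.inl '' {j : ℕ | j < c})) := by
  unfold PP
  congr 1
  ext f
  constructor
  · rintro ⟨j, rfl⟩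
    exact ⟨Sum.inl j, ⟨j, j.isLt, rfl⟩, rfl⟩
  · rintro ⟨-, ⟨j, hj, rfl⟩, rfl⟩
    exact ⟨⟨j, hj⟩, rfl⟩

lemma PP_isPrime (c : ℕ) : (PP K c).IsPrime := by
  rw [PP_eq]; exact isPrime_span_X _

lemma mem_PP_iff {c : ℕ} {f : TT K} :
    f ∈ PP K c ↔ ∃ a : ℕ → TT K, f = ∑ j ∈ Finset.range c, a j * xx K j := by
  rw [PP, Ideal.mem_span_range_iff_exists_fun]
  constructor
  · rintro ⟨cf, rfl⟩
    refine ⟨fun j => if h : j < c then cf ⟨j, h⟩ else 0, ?_⟩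
    rw [Finset.sum_range fun j => _]
    apply Finset.sum_congr rfl
    intro j _
    simp [j.isLt]
  · rintro ⟨a, rfl⟩
    refine ⟨fun j => a j, ?_⟩
    rw [Finset.sum_range fun j => _]

lemma gg_mem_PP (c i : ℕ) : gg K c i ∈ PP K c := by
  rw [gg]
  apply Ideal.sum_mem
  intro j hj
  exact Ideal.mul_mem_left _ _ (Ideal.subset_span ⟨⟨j, Finset.mem_range.1 hj⟩, rfl⟩)

lemma II_le_PP (k c : ℕ) : II K k c ≤ PP K c := by
  rw [II, Ideal.span_le]
  rintro - ⟨i, rfl⟩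
  exact gg_mem_PP K c i

def evid : TT K →+* K :=
  eval (Sum.elim (fun _ => 0) (fun p => if p.1 = p.2 then 1 else 0))

lemma evid_dd (n : ℕ) : evid K (dd K n) = 1 := by
  rw [hom_dd]
  have : (Matrix.of fun a b : Fin n => evid K (ww K a b)) = 1 := by
    refine Matrix.ext fun a b => ?_
    simp only [Matrix.of_apply, ww, evid, eval_X, Sum.elim_inr, Matrix.one_apply]
    by_cases h : a = b
    · simp [h]
    · rw [if_neg (by simpa [Fin.ext_iff] using h), if_neg h]
  rw [this, Matrix.det_one]

lemma dd_ne_zero (n : ℕ) : dd K n ≠ 0 := by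
  intro h
  have := evid_dd K n
  rw [h, map_zero] at this
  exact zero_ne_one this

lemma dd_not_mem_PP (n c : ℕ) : dd K n ∉ PP K c := by
  intro h
  rw [PP_eq] at h
  have h0 := killVars_eq_zero_of_mem_span _ h
  have hfix : killVars (Sum.inl '' {j : ℕ | j < c}) (dd K n) = dd K n := by
    rw [dd, ahom_det K (killVars (Sum.inl '' {j : ℕ | j < c}))]
    have : ((Wm K n).map (killVars (Sum.inl '' {j : ℕ | j < c}))) = Wm K n := by
      refine Matrix.ext fun a b => ?_
      simpa [Wm, ww] using killVars_X_not_mem (K := K) (Sum.inl '' {j : ℕ | j < c})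
        (i := Sum.inr ((a : ℕ), (b : ℕ))) (by simp)
    rw [this]
  rw [hfix] at h0
  exact dd_ne_zero K n h0

def ev1 (k : ℕ) : TT K →+* K :=
  eval (Sum.elim (fun j => if j = 0 then 1 else 0)
    (fun p => if p.1 = k ∧ p.2 = 0 then 1 else 0))

lemma ev1_gg (k M i : ℕ) (hM : 0 < M) :
    ev1 K k (gg K M i) = if i = k then 1 else 0 := by
  rw [gg, map_sum]
  rw [Finset.sum_eq_single_of_mem 0 (Finset.mem_range.2 hM)]
  · simp [ev1, ww, xx]
  · intro j _ hj
    simp [ev1, ww, xx, hj]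

lemma ev1_dd (k n : ℕ) (hk : n ≤ k) (hn : 0 < n) : ev1 K k (dd K n) = 0 := by
  rw [hom_dd]
  have : (Matrix.of fun a b : Fin n => ev1 K k (ww K a b)) = 0 := by
    refine Matrix.ext fun a b => ?_
    have : (a : ℕ) ≠ k := Nat.ne_of_lt (lt_of_lt_of_le a.isLt hk)
    simp [ww, ev1, this]
  rw [this]
  exact (haveI : Nonempty (Fin n) := ⟨⟨0, hn⟩⟩; Matrix.det_zero)

lemma gg_not_mem_II {k' k M : ℕ} (h : k' ≤ k) (hM : 0 < M) :
    gg K M k ∉ II K k' M := by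
  intro hmem
  obtain ⟨a, ha⟩ := (mem_II_iff K).1 hmem
  have := congrArg (ev1 K k) ha
  rw [ev1_gg K k M k hM, if_pos rfl, map_sum] at this
  rw [Finset.sum_eq_zero] at this
  · exact one_ne_zero this
  · intro i hi
    have hik : i ≠ k := Nat.ne_of_lt (lt_of_lt_of_le (Finset.mem_range.1 hi) h)
    rw [_root_.map_mul, ev1_gg K k M i hM, if_neg hik, mul_zero]

lemma gg_not_mem_QQ {N : ℕ} (hN : 0 < N) : gg K N N ∉ QQ K N := by
  intro hmem
  obtain ⟨a, b, ha⟩ := (mem_QQ_iff K).1 hmem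
  have := congrArg (ev1 K N) ha
  rw [ev1_gg K N N N hN, if_pos rfl, map_add, _root_.map_mul, ev1_dd K N N le_rfl hN,
    mul_zero, add_zero, map_sum, Finset.sum_eq_zero] at this
  · exact one_ne_zero this
  · intro i hi
    have hik : i ≠ N := Nat.ne_of_lt (Finset.mem_range.1 hi)
    rw [_root_.map_mul, ev1_gg K N N i hN, if_neg hik, mul_zero]

lemma adjE_last (N : ℕ) : adjE K (N+1) N N = dd K N := by
  rw [adjE, dif_pos ⟨N.lt_succ_self, N.lt_succ_self⟩]
  have hl : (⟨N, N.lt_succ_self⟩ : Fin (N+1)) = Fin.last N := rfl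
  rw [hl, Matrix.adjugate_fin_succ_eq_det_submatrix]
  have hsign : ((-1 : TT K)) ^ ((Fin.last N : ℕ) + (Fin.last N : ℕ)) = 1 :=
    Even.neg_one_pow ⟨N, rfl⟩
  rw [hsign, one_mul]
  have hsub : (Wm K (N+1)).submatrix (Fin.last N).succAbove (Fin.last N).succAbove
      = Wm K N := by
    refine Matrix.ext fun a b => ?_
    simp [Fin.succAbove_last, Wm, Matrix.submatrix_apply]
  rw [hsub, dd]

lemma det_mul_eq_zero_of_mulVec_eq_zero {R : Type*} [CommRing R] {n : ℕ}
    (A : Matrix (Fin n) (Fin n) R) (v : Fin n → R) (hv : A *ᵥ v = 0) (j : Fin n) :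
    A.det * v j = 0 := by
  have h : A.adjugate *ᵥ (A *ᵥ v) = A.det • v := by
    rw [Matrix.mulVec_mulVec, Matrix.adjugate_mul, Matrix.smul_mulVec,
      Matrix.one_mulVec]
  rw [hv, Matrix.mulVec_zero] at h
  have h2 := congrFun h j
  simpa [Pi.smul_apply, smul_eq_mul] using h2.symm

/-- Koszul-only syzygy property for the first `k` rows with `c` columns. -/
def SyzWP (k c : ℕ) : Prop :=
  ∀ a : ℕ → TT K, (∑ i ∈ Finset.range k, a i * gg K c i = 0) →
    ∃ t : ℕ → ℕ → TT K, ∀ i < k, a i = ∑ j ∈ Finset.range k, (t i j - t j i) * gg K c j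

lemma antisym_sum_zero (k : ℕ) (t : ℕ → ℕ → TT K) (G : ℕ → TT K) :
    ∑ i ∈ Finset.range k, ∑ j ∈ Finset.range k, (t i j - t j i) * G j * G i = 0 := by
  have h1 : ∑ i ∈ Finset.range k, ∑ j ∈ Finset.range k, (t i j - t j i) * G j * G i
      = ∑ i ∈ Finset.range k, ∑ j ∈ Finset.range k,
        (t i j * G j * G i - t j i * G j * G i) := by
    apply Finset.sum_congr rfl; intro i _; apply Finset.sum_congr rfl; intro j _; ring
  have h2 : ∑ i ∈ Finset.range k, ∑ j ∈ Finset.range k, t i j * G j * G i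
      = ∑ i ∈ Finset.range k, ∑ j ∈ Finset.range k, t j i * G j * G i := by
    rw [Finset.sum_comm]
    apply Finset.sum_congr rfl; intro i _; apply Finset.sum_congr rfl; intro j _; ring
  have h3 : ∑ i ∈ Finset.range k, ∑ j ∈ Finset.range k,
        (t i j * G j * G i - t j i * G j * G i)
      = (∑ i ∈ Finset.range k, ∑ j ∈ Finset.range k, t i j * G j * G i)
        - ∑ i ∈ Finset.range k, ∑ j ∈ Finset.range k, t j i * G j * G i := by
    rw [← Finset.sum_sub_distrib]
    apply Finset.sum_congr rfl; intro i _; rw [← Finset.sum_sub_distrib]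
  rw [h1, h3, h2, sub_self]

lemma koszul_prod (k c : ℕ) (t : ℕ → ℕ → TT K) :
    ∑ i ∈ Finset.range k, (∑ j ∈ Finset.range k, (t i j - t j i) * gg K c j) * gg K (c+1) i
      = xx K c * (∑ i ∈ Finset.range k, ∑ j ∈ Finset.range k,
          (t j i - t i j) * ww K j c * gg K (c+1) i) := by
  have expand : ∀ i ∈ Finset.range k,
      (∑ j ∈ Finset.range k, (t i j - t j i) * gg K c j) * gg K (c+1) i
        = (∑ j ∈ Finset.range k, (t i j - t j i) * gg K (c+1) j * gg K (c+1) i)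
          - xx K c * ∑ j ∈ Finset.range k, (t i j - t j i) * ww K j c * gg K (c+1) i := by
    intro i _
    rw [Finset.sum_mul, Finset.mul_sum, ← Finset.sum_sub_distrib]
    apply Finset.sum_congr rfl
    intro j _
    simp only [gg_succ]
    ring
  rw [Finset.sum_congr rfl expand, Finset.sum_sub_distrib, antisym_sum_zero, zero_sub,
    ← Finset.mul_sum]
  rw [← mul_neg]
  congr 1
  rw [← Finset.sum_neg_distrib]
  apply Finset.sum_congr rfl
  intro i _
  rw [← Finset.sum_neg_distrib]
  apply Finset.sum_congr rfl
  intro j _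
  ring

lemma inner_mem_II (k c : ℕ) (t : ℕ → ℕ → TT K) :
    (∑ i ∈ Finset.range k, ∑ j ∈ Finset.range k,
      (t j i - t i j) * ww K j c * gg K (c+1) i) ∈ II K k (c+1) := by
  apply Ideal.sum_mem
  intro i hi
  apply Ideal.sum_mem
  intro j _
  exact Ideal.mul_mem_left _ _ (gg_mem_II K (Finset.mem_range.1 hi))

lemma syzW_step (k c : ℕ) (hprime : (II K k c).IsPrime) (hgnot : gg K c k ∉ II K k c)
    (hs : SyzWP K k c) : SyzWP K (k+1) c := by
  intro a ha
  rw [Finset.sum_range_succ] at ha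
  have hmem : a k * gg K c k ∈ II K k c := by
    rw [eq_neg_of_add_eq_zero_right ha]
    exact neg_mem (sum_mem_II K a)
  have hak : a k ∈ II K k c := (hprime.mem_or_mem hmem).resolve_right hgnot
  obtain ⟨cf, hcf⟩ := (mem_II_iff K).1 hak
  have hs' : ∑ i ∈ Finset.range k, (a i + cf i * gg K c k) * gg K c i = 0 := by
    have h1 : ∑ i ∈ Finset.range k, (a i + cf i * gg K c k) * gg K c i
        = ∑ i ∈ Finset.range k, a i * gg K c i
          + (∑ i ∈ Finset.range k, cf i * gg K c i) * gg K c k := by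
      rw [Finset.sum_mul, ← Finset.sum_add_distrib]
      apply Finset.sum_congr rfl
      intro i _
      ring
    rw [h1, ← hcf]
    exact ha
  obtain ⟨t, ht⟩ := hs _ hs'
  set T : ℕ → ℕ → TT K :=
    fun i j => if i < k ∧ j < k then t i j else if i < k ∧ j = k then -(cf i) else 0 with hT
  have hTa : ∀ i j, i < k → j < k → T i j = t i j := by
    intro i j hi hj
    show (if i < k ∧ j < k then t i j else if i < k ∧ j = k then -(cf i) else 0) = t i j
    rw [if_pos ⟨hi, hj⟩]
  have hTb : ∀ i, i < k → T i k = -(cf i) := by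
    intro i hi
    show (if i < k ∧ k < k then t i k else if i < k ∧ k = k then -(cf i) else 0) = -(cf i)
    rw [if_neg (by omega), if_pos ⟨hi, rfl⟩]
  have hTc : ∀ i j, ¬ i < k → T i j = 0 := by
    intro i j hi
    show (if i < k ∧ j < k then t i j else if i < k ∧ j = k then -(cf i) else 0) = 0
    rw [if_neg (by omega), if_neg (by omega)]
  refine ⟨T, ?_⟩
  intro i hik1
  rw [Finset.sum_range_succ]
  by_cases hik : i < k
  · have h1 := ht i hik
    have e1 : ∀ j ∈ Finset.range k, (T i j - T j i) * gg K c j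
        = (t i j - t j i) * gg K c j := by
      intro j hj
      have hjk := Finset.mem_range.1 hj
      rw [hTa i j hik hjk, hTa j i hjk hik]
    rw [Finset.sum_congr rfl e1, ← h1, hTb i hik, hTc k i (by omega)]
    ring
  · have hik2 : k = i := by omega
    subst hik2
    have e1 : ∀ j ∈ Finset.range k, (T k j - T j k) * gg K c j
        = cf j * gg K c j := by
      intro j hj
      have hjk := Finset.mem_range.1 hj
      rw [hTc k j (by omega), hTb j hjk]
      ring
    rw [Finset.sum_congr rfl e1, ← hcf, hTc k k (by omega)]
    ring

end Kill

section Loc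
variable (K : Type) [Field K]

abbrev DD (M : ℕ) := Localization.Away (xx K M)

noncomputable def psiv (k M : ℕ) : (ℕ ⊕ ℕ × ℕ) → DD K M :=
  Sum.elim (fun j => algebraMap (TT K) (DD K M) (xx K j))
    (fun p => if p.2 = M ∧ p.1 < k
      then -(algebraMap (TT K) (DD K M) (gg K M p.1))
            * (IsLocalization.Away.invSelf (S := DD K M) (xx K M))
      else algebraMap (TT K) (DD K M) (ww K p.1 p.2))

noncomputable def psi (k M : ℕ) : TT K →+* DD K M :=
  eval₂Hom ((algebraMap (TT K) (DD K M)).comp MvPolynomial.C) (psiv K k M)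

lemma psi_C (k M : ℕ) (a : K) :
    psi K k M (MvPolynomial.C a) = algebraMap (TT K) (DD K M) (MvPolynomial.C a) := by
  simp [psi]

lemma psi_x (k M j : ℕ) :
    psi K k M (xx K j) = algebraMap (TT K) (DD K M) (xx K j) := by
  simp [psi, psiv, xx]

lemma psi_w_not (k M i j : ℕ) (h : ¬(j = M ∧ i < k)) :
    psi K k M (ww K i j) = algebraMap (TT K) (DD K M) (ww K i j) := by
  show eval₂Hom ((algebraMap (TT K) (DD K M)).comp MvPolynomial.C) (psiv K k M)
      (X (Sum.inr (i, j))) = algebraMap (TT K) (DD K M) (ww K i j)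
  rw [eval₂Hom_X']
  show (if j = M ∧ i < k
      then -(algebraMap (TT K) (DD K M) (gg K M i))
            * (IsLocalization.Away.invSelf (S := DD K M) (xx K M))
      else algebraMap (TT K) (DD K M) (ww K i j)) = algebraMap (TT K) (DD K M) (ww K i j)
  rw [if_neg h]

lemma psi_w_spec (k M i : ℕ) (hi : i < k) :
    psi K k M (ww K i M) = -(algebraMap (TT K) (DD K M) (gg K M i))
      * (IsLocalization.Away.invSelf (S := DD K M) (xx K M)) := by
  show eval₂Hom ((algebraMap (TT K) (DD K M)).comp MvPolynomial.C) (psiv K k M)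
      (X (Sum.inr (i, M))) = _
  rw [eval₂Hom_X']
  show (if M = M ∧ i < k
      then -(algebraMap (TT K) (DD K M) (gg K M i))
            * (IsLocalization.Away.invSelf (S := DD K M) (xx K M))
      else algebraMap (TT K) (DD K M) (ww K i M)) = _
  rw [if_pos ⟨rfl, hi⟩]

lemma psi_gg_base (k M i : ℕ) :
    psi K k M (gg K M i) = algebraMap (TT K) (DD K M) (gg K M i) := by
  rw [gg, map_sum, map_sum]
  apply Finset.sum_congr rfl
  intro j hj
  have hjM : ¬(j = M ∧ i < k) := by
    have := Finset.mem_range.1 hj; omega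
  rw [_root_.map_mul, _root_.map_mul, psi_w_not K k M i j hjM, psi_x]

lemma psi_gg_row (k M i : ℕ) (hi : i < k) : psi K k M (gg K (M+1) i) = 0 := by
  rw [gg_succ, map_add, _root_.map_mul, psi_gg_base, psi_w_spec K k M i hi, psi_x]
  have hu : algebraMap (TT K) (DD K M) (xx K M)
      * (IsLocalization.Away.invSelf (S := DD K M) (xx K M)) = 1 :=
    IsLocalization.Away.mul_invSelf _
  calc algebraMap (TT K) (DD K M) (gg K M i)
      + -(algebraMap (TT K) (DD K M) (gg K M i))
          * (IsLocalization.Away.invSelf (S := DD K M) (xx K M))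
          * algebraMap (TT K) (DD K M) (xx K M)
      = algebraMap (TT K) (DD K M) (gg K M i)
        - algebraMap (TT K) (DD K M) (gg K M i)
          * (algebraMap (TT K) (DD K M) (xx K M)
            * (IsLocalization.Away.invSelf (S := DD K M) (xx K M))) := by ring
    _ = 0 := by rw [hu, mul_one, sub_self]

lemma psi_div (k M : ℕ) (f : TT K) :
    ∃ (e : ℕ) (h : TT K), (xx K M)^e * f - h ∈ II K k (M+1)
      ∧ algebraMap (TT K) (DD K M) h
          = algebraMap (TT K) (DD K M) ((xx K M)^e) * psi K k M f := by
  induction f using MvPolynomial.induction_on with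
  | C a =>
      refine ⟨0, MvPolynomial.C a, by simp, ?_⟩
      rw [psi_C, pow_zero, _root_.map_one, one_mul]
  | add p q hp hq =>
      obtain ⟨e1, h1, m1, a1⟩ := hp
      obtain ⟨e2, h2, m2, a2⟩ := hq
      refine ⟨e1+e2, (xx K M)^e2 * h1 + (xx K M)^e1 * h2, ?_, ?_⟩
      · have heq : (xx K M)^(e1+e2) * (p+q) - ((xx K M)^e2*h1 + (xx K M)^e1*h2)
            = (xx K M)^e2 * ((xx K M)^e1 * p - h1)
              + (xx K M)^e1 * ((xx K M)^e2 * q - h2) := by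
          rw [pow_add]; ring
        rw [heq]
        exact add_mem (Ideal.mul_mem_left _ _ m1) (Ideal.mul_mem_left _ _ m2)
      · simp only [map_add, _root_.map_mul, map_pow, a1, a2]
        ring
  | mul_X p v hp =>
      obtain ⟨e, h, m, a⟩ := hp
      by_cases hsp : ∃ i, v = Sum.inr (i, M) ∧ i < k
      · obtain ⟨i, rfl, hik⟩ := hsp
        refine ⟨e+1, -(h * gg K M i), ?_, ?_⟩
        · have hXw : (X (Sum.inr (i, M)) : TT K) = ww K i M := rfl
          have heq : (xx K M)^(e+1) * (p * X (Sum.inr (i, M))) - -(h * gg K M i)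
              = ((xx K M)^e * p) * (gg K (M+1) i)
                - ((xx K M)^e * p - h) * gg K M i := by
            rw [hXw, gg_succ, pow_succ]; ring
          rw [heq]
          exact sub_mem (Ideal.mul_mem_left _ _ (gg_mem_II K hik))
            (Ideal.mul_mem_right _ _ m)
        · have hXw : (X (Sum.inr (i, M)) : TT K) = ww K i M := rfl
          have hu : algebraMap (TT K) (DD K M) (xx K M)
              * (IsLocalization.Away.invSelf (S := DD K M) (xx K M)) = 1 :=
            IsLocalization.Away.mul_invSelf _
          rw [hXw, map_neg, _root_.map_mul, a, _root_.map_mul (psi K k M),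
            psi_w_spec K k M i hik]
          rw [pow_succ, _root_.map_mul]
          linear_combination (algebraMap (TT K) (DD K M) ((xx K M)^e) * psi K k M p
            * algebraMap (TT K) (DD K M) (gg K M i)) * hu
      · have hpsi : psi K k M (X v) = algebraMap (TT K) (DD K M) (X v) := by
          rcases v with j | ⟨i, j⟩
          · exact psi_x K k M j
          · refine psi_w_not K k M i j ?_
            rintro ⟨rfl, hik⟩
            exact hsp ⟨i, rfl, hik⟩
        refine ⟨e, h * X v, ?_, ?_⟩
        · have heq : (xx K M)^e * (p * X v) - h * X v = ((xx K M)^e * p - h) * X v := by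
            ring
          rw [heq]
          exact Ideal.mul_mem_right _ _ m
        · rw [_root_.map_mul, a, _root_.map_mul (psi K k M), hpsi]
          ring

lemma satW (k M : ℕ) (hsyz : SyzWP K k M) :
    ∀ (e : ℕ) (f : TT K), (xx K M)^e * f ∈ II K k (M+1) → f ∈ II K k (M+1) := by
  intro e
  induction e with
  | zero => intro f hf; rwa [pow_zero, one_mul] at hf
  | succ e ih =>
      intro f hf
      obtain ⟨a, ha⟩ := (mem_II_iff K).1 hf
      choose atil hatil using fun i => sigmaX_split K M (a i)
      have hsig : ∑ i ∈ Finset.range k, sigmaX K M (a i) * gg K M i = 0 := by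
        have hc := congrArg (sigmaX K M) ha
        rw [_root_.map_mul, map_pow, sigmaX_x_self, map_sum] at hc
        rw [zero_pow (Nat.succ_ne_zero e), zero_mul] at hc
        have hc2 : ∑ x ∈ Finset.range k, sigmaX K M (a x * gg K (M+1) x)
            = ∑ i ∈ Finset.range k, sigmaX K M (a i) * gg K M i := by
          apply Finset.sum_congr rfl
          intro i _
          rw [_root_.map_mul, sigmaX_gg_succ]
        rw [hc2] at hc
        exact hc.symm
      obtain ⟨t, ht⟩ := hsyz _ hsig
      have key : (xx K M)^(e+1) * f
          = xx K M * ((∑ i ∈ Finset.range k, ∑ j ∈ Finset.range k,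
              (t j i - t i j) * ww K j M * gg K (M+1) i)
            + ∑ i ∈ Finset.range k, atil i * gg K (M+1) i) := by
        rw [ha]
        have h1 : ∀ i ∈ Finset.range k, a i * gg K (M+1) i
            = sigmaX K M (a i) * gg K (M+1) i + xx K M * (atil i * gg K (M+1) i) := by
          intro i _
          conv_lhs => rw [hatil i]
          ring
        rw [Finset.sum_congr rfl h1, Finset.sum_add_distrib]
        have h2 : ∀ i ∈ Finset.range k, sigmaX K M (a i) * gg K (M+1) i
            = (∑ j ∈ Finset.range k, (t i j - t j i) * gg K M j) * gg K (M+1) i := by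
          intro i hi
          rw [ht i (Finset.mem_range.1 hi)]
        rw [Finset.sum_congr rfl h2, koszul_prod, ← Finset.mul_sum, ← mul_add]
      have hx : (xx K M) ≠ 0 := X_ne_zero _
      have hcancel : (xx K M)^e * f
          = (∑ i ∈ Finset.range k, ∑ j ∈ Finset.range k,
              (t j i - t i j) * ww K j M * gg K (M+1) i)
            + ∑ i ∈ Finset.range k, atil i * gg K (M+1) i := by
        apply mul_left_cancel₀ hx
        rw [← key, pow_succ]
        ring
      apply ih
      rw [hcancel]
      refine add_mem (inner_mem_II K k M t) (Ideal.sum_mem _ fun i hi => ?_)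
      exact Ideal.mul_mem_left _ _ (gg_mem_II K (Finset.mem_range.1 hi))

lemma dd_isDomain (M : ℕ) : IsDomain (DD K M) :=
  IsLocalization.isDomain_localization
    (powers_le_nonZeroDivisors_of_noZeroDivisors (X_ne_zero _))

lemma algebraMap_DD_injective (M : ℕ) :
    Function.Injective (algebraMap (TT K) (DD K M)) :=
  IsLocalization.injective (M := Submonoid.powers (xx K M)) (DD K M)
    (powers_le_nonZeroDivisors_of_noZeroDivisors (X_ne_zero _))

lemma II_eq_ker (k M : ℕ) (hsyz : SyzWP K k M) :
    II K k (M+1) = RingHom.ker (psi K k M) := by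
  apply le_antisymm
  · rw [II, Ideal.span_le]
    rintro - ⟨i, rfl⟩
    exact psi_gg_row K k M i i.isLt
  · intro f hf
    have hf0 : psi K k M f = 0 := hf
    obtain ⟨e, h, hm, halg⟩ := psi_div K k M f
    rw [hf0, mul_zero] at halg
    have h0 : h = 0 := by
      apply algebraMap_DD_injective K M
      rw [halg, map_zero]
    rw [h0, sub_zero] at hm
    exact satW K k M hsyz e f hm

lemma wide_prime (k M : ℕ) (hsyz : SyzWP K k M) : (II K k (M+1)).IsPrime := by
  haveI := dd_isDomain K M
  rw [II_eq_ker K k M hsyz]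
  exact RingHom.ker_isPrime _

lemma syzW_all : ∀ M k, k ≤ M → SyzWP K k M := by
  intro M
  induction M with
  | zero =>
      intro k hk
      interval_cases k
      intro a _
      exact ⟨0, fun i hi => absurd hi (Nat.not_lt_zero i)⟩
  | succ M ihM =>
      intro k
      induction k with
      | zero =>
          intro _ a _
          exact ⟨0, fun i hi => absurd hi (Nat.not_lt_zero i)⟩
      | succ k ihk =>
          intro hk
          have hkM : k ≤ M := Nat.lt_succ_iff.1 hk
          exact syzW_step K k (M+1) (wide_prime K k M (ihM k hkM))
            (gg_not_mem_II K (le_refl k) (Nat.succ_pos M))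
            (ihk (le_trans (Nat.le_succ k) hk))

end Loc

section Main
variable (K : Type) [Field K]

lemma QQ_zero : QQ K 0 = ⊤ := by
  have h1 : dd K 0 = 1 := Matrix.det_fin_zero
  rw [QQ, h1, Ideal.span_singleton_one, sup_top_eq]

lemma v_syzygy (N : ℕ) : ∑ i ∈ Finset.range (N+1), adjE K (N+1) N i * gg K N i = 0 := by
  rw [cramer_tall K N N (Nat.lt_succ_self N), if_neg (lt_irrefl N), mul_zero]

lemma syzTall (N : ℕ)
    (HQ : ∀ b : TT K, b * gg K N N ∈ II K N N → b ∈ QQ K N) :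
    ∀ a : ℕ → TT K, (∑ i ∈ Finset.range (N+1), a i * gg K N i = 0) →
      ∃ (t : ℕ → ℕ → TT K) (γ : TT K), ∀ i < N+1,
        a i = ∑ j ∈ Finset.range (N+1), (t i j - t j i) * gg K N j
          + γ * adjE K (N+1) N i := by
  intro a ha
  rw [Finset.sum_range_succ] at ha
  have hmem : a N * gg K N N ∈ II K N N := by
    rw [eq_neg_of_add_eq_zero_right ha]
    exact neg_mem (sum_mem_II K a)
  obtain ⟨cf, γ0, hcf⟩ := (mem_QQ_iff K).1 (HQ _ hmem)
  have hvN : adjE K (N+1) N N = dd K N := adjE_last K N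
  have hsum1 : ∑ i ∈ Finset.range N, adjE K (N+1) N i * gg K N i
      = -(dd K N * gg K N N) := by
    have h := v_syzygy K N
    rw [Finset.sum_range_succ, hvN] at h
    exact eq_neg_of_add_eq_zero_left h
  have hsum2 : ∑ i ∈ Finset.range N, cf i * gg K N i = a N - γ0 * dd K N :=
    eq_sub_of_add_eq hcf.symm
  have hsum3 : ∑ i ∈ Finset.range N, a i * gg K N i = -(a N * gg K N N) :=
    eq_neg_of_add_eq_zero_left ha
  have hs' : ∑ i ∈ Finset.range N,
      ((a i - γ0 * adjE K (N+1) N i) + cf i * gg K N N) * gg K N i = 0 := by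
    have h1 : ∑ i ∈ Finset.range N,
        ((a i - γ0 * adjE K (N+1) N i) + cf i * gg K N N) * gg K N i
        = (∑ i ∈ Finset.range N, a i * gg K N i)
          - γ0 * (∑ i ∈ Finset.range N, adjE K (N+1) N i * gg K N i)
          + (∑ i ∈ Finset.range N, cf i * gg K N i) * gg K N N := by
      rw [Finset.mul_sum, Finset.sum_mul, ← Finset.sum_sub_distrib, ← Finset.sum_add_distrib]
      apply Finset.sum_congr rfl
      intro i _
      ring
    rw [h1, hsum1, hsum2, hsum3]
    ring
  obtain ⟨t0, ht0⟩ := syzW_all K N N le_rfl _ hs'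
  set T : ℕ → ℕ → TT K :=
    fun i j => if i < N ∧ j < N then t0 i j else if i < N ∧ j = N then -(cf i) else 0 with hT
  have hTa : ∀ i j, i < N → j < N → T i j = t0 i j := by
    intro i j hi hj
    show (if i < N ∧ j < N then t0 i j else if i < N ∧ j = N then -(cf i) else 0) = t0 i j
    rw [if_pos ⟨hi, hj⟩]
  have hTb : ∀ i, i < N → T i N = -(cf i) := by
    intro i hi
    show (if i < N ∧ N < N then t0 i N else if i < N ∧ N = N then -(cf i) else 0) = -(cf i)
    rw [if_neg (by omega), if_pos ⟨hi, rfl⟩]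
  have hTc : ∀ i j, ¬ i < N → T i j = 0 := by
    intro i j hi
    show (if i < N ∧ j < N then t0 i j else if i < N ∧ j = N then -(cf i) else 0) = 0
    rw [if_neg (by omega), if_neg (by omega)]
  refine ⟨T, γ0, ?_⟩
  intro i hi1
  rw [Finset.sum_range_succ]
  by_cases hik : i < N
  · have h1 := ht0 i hik
    have e1 : ∀ j ∈ Finset.range N, (T i j - T j i) * gg K N j
        = (t0 i j - t0 j i) * gg K N j := by
      intro j hj
      have hjk := Finset.mem_range.1 hj
      rw [hTa i j hik hjk, hTa j i hjk hik]
    rw [Finset.sum_congr rfl e1, ← h1, hTb i hik, hTc N i (by omega)]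
    ring
  · have hik2 : N = i := by omega
    subst hik2
    have e1 : ∀ j ∈ Finset.range N, (T N j - T j N) * gg K N j = cf j * gg K N j := by
      intro j hj
      have hjk := Finset.mem_range.1 hj
      rw [hTc N j (by omega), hTb j hjk]
      ring
    rw [Finset.sum_congr rfl e1, hTc N N (by omega), hvN, hcf]
    ring

lemma syzD (N : ℕ)
    (HQ : ∀ b : TT K, b * gg K N N ∈ II K N N → b ∈ QQ K N) :
    ∀ (a : ℕ → TT K) (b : TT K),
      (∑ i ∈ Finset.range (N+1), a i * gg K N i) + b * dd K (N+1) = 0 →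
      ∃ (t : ℕ → ℕ → TT K) (β : ℕ → TT K),
        (∀ i < N+1, a i = ∑ j ∈ Finset.range (N+1), (t i j - t j i) * gg K N j
          + ∑ j ∈ Finset.range (N+1), β j * adjE K (N+1) j i)
        ∧ b = -∑ j ∈ Finset.range N, β j * xx K j := by
  intro a b hab
  have hbd : b * dd K (N+1) ∈ PP K N := by
    rw [eq_neg_of_add_eq_zero_right hab]
    exact neg_mem (II_le_PP K (N+1) N (sum_mem_II K a))
  have hb : b ∈ PP K N :=
    ((PP_isPrime K N).mem_or_mem hbd).resolve_right (dd_not_mem_PP K (N+1) N)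
  obtain ⟨β0, hβ0⟩ := (mem_PP_iff K).1 hb
  have hs' : ∑ i ∈ Finset.range (N+1),
      (a i + ∑ j ∈ Finset.range N, β0 j * adjE K (N+1) j i) * gg K N i = 0 := by
    have h1 : ∑ i ∈ Finset.range (N+1),
        (a i + ∑ j ∈ Finset.range N, β0 j * adjE K (N+1) j i) * gg K N i
        = (∑ i ∈ Finset.range (N+1), a i * gg K N i)
          + ∑ j ∈ Finset.range N, β0 j
              * (∑ i ∈ Finset.range (N+1), adjE K (N+1) j i * gg K N i) := by
      have e : ∀ i ∈ Finset.range (N+1),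
          (a i + ∑ j ∈ Finset.range N, β0 j * adjE K (N+1) j i) * gg K N i
          = a i * gg K N i
            + ∑ j ∈ Finset.range N, β0 j * adjE K (N+1) j i * gg K N i := by
        intro i _
        rw [add_mul, Finset.sum_mul]
      rw [Finset.sum_congr rfl e, Finset.sum_add_distrib]
      congr 1
      rw [Finset.sum_comm]
      apply Finset.sum_congr rfl
      intro j _
      rw [Finset.mul_sum]
      apply Finset.sum_congr rfl
      intro i _
      ring
    have e2 : ∀ j ∈ Finset.range N, β0 j
        * (∑ i ∈ Finset.range (N+1), adjE K (N+1) j i * gg K N i)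
        = β0 j * (dd K (N+1) * xx K j) := by
      intro j hj
      rw [cramer_tall K N j (Nat.lt_succ_of_lt (Finset.mem_range.1 hj)),
        if_pos (Finset.mem_range.1 hj)]
    have e3 : ∑ j ∈ Finset.range N, β0 j * (dd K (N+1) * xx K j) = b * dd K (N+1) := by
      rw [hβ0, Finset.sum_mul]
      apply Finset.sum_congr rfl
      intro j _
      ring
    rw [h1, Finset.sum_congr rfl e2, e3]
    exact hab
  obtain ⟨t, γ, ht⟩ := syzTall K N HQ _ hs'
  refine ⟨t, (fun j => if j < N then -(β0 j) else γ), ?_, ?_⟩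
  · intro i hi
    have h1 := ht i hi
    have e3 : ∑ j ∈ Finset.range (N+1),
        (if j < N then -(β0 j) else γ) * adjE K (N+1) j i
        = (∑ j ∈ Finset.range N, -(β0 j) * adjE K (N+1) j i) + γ * adjE K (N+1) N i := by
      rw [Finset.sum_range_succ]
      congr 1
      · apply Finset.sum_congr rfl
        intro j hj
        rw [if_pos (Finset.mem_range.1 hj)]
      · rw [if_neg (lt_irrefl N)]
    have e4 : ∑ j ∈ Finset.range N, -(β0 j) * adjE K (N+1) j i
        = -∑ j ∈ Finset.range N, β0 j * adjE K (N+1) j i := by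
      rw [← Finset.sum_neg_distrib]
      apply Finset.sum_congr rfl
      intro j _
      ring
    rw [e3, e4]
    calc a i = (a i + ∑ j ∈ Finset.range N, β0 j * adjE K (N+1) j i)
        - ∑ j ∈ Finset.range N, β0 j * adjE K (N+1) j i := by ring
      _ = _ := by rw [h1]; ring
  · have e5 : ∀ j ∈ Finset.range N, (if j < N then -(β0 j) else γ) * xx K j
        = -(β0 j * xx K j) := by
      intro j hj
      rw [if_pos (Finset.mem_range.1 hj)]
      ring
    rw [Finset.sum_congr rfl e5, Finset.sum_neg_distrib, neg_neg]
    exact hβ0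

lemma satQ (N : ℕ)
    (HQ : ∀ b : TT K, b * gg K N N ∈ II K N N → b ∈ QQ K N) :
    ∀ (e : ℕ) (f : TT K), (xx K N)^e * f ∈ QQ K (N+1) → f ∈ QQ K (N+1) := by
  intro e
  induction e with
  | zero => intro f hf; rwa [pow_zero, one_mul] at hf
  | succ e ih =>
      intro f hf
      obtain ⟨a, b, ha⟩ := (mem_QQ_iff K).1 hf
      choose atil hatil using fun i => sigmaX_split K N (a i)
      obtain ⟨btil, hbtil⟩ := sigmaX_split K N b
      have hsig : (∑ i ∈ Finset.range (N+1), sigmaX K N (a i) * gg K N i)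
          + sigmaX K N b * dd K (N+1) = 0 := by
        have hc := congrArg (sigmaX K N) ha
        rw [_root_.map_mul, map_pow, sigmaX_x_self, map_add, map_sum, _root_.map_mul,
          sigmaX_dd] at hc
        rw [zero_pow (Nat.succ_ne_zero e), zero_mul] at hc
        have hc2 : ∑ x ∈ Finset.range (N+1), sigmaX K N (a x * gg K (N+1) x)
            = ∑ i ∈ Finset.range (N+1), sigmaX K N (a i) * gg K N i := by
          apply Finset.sum_congr rfl
          intro i _
          rw [_root_.map_mul, sigmaX_gg_succ]
        rw [hc2] at hc
        exact hc.symm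
      obtain ⟨t, β, ht, hbeq⟩ := syzD K N HQ _ _ hsig
      have hmid : ∑ i ∈ Finset.range (N+1),
          (∑ j ∈ Finset.range (N+1), β j * adjE K (N+1) j i) * gg K (N+1) i
          = ∑ j ∈ Finset.range (N+1), β j * (dd K (N+1) * xx K j) := by
        have e1 : ∀ i ∈ Finset.range (N+1),
            (∑ j ∈ Finset.range (N+1), β j * adjE K (N+1) j i) * gg K (N+1) i
            = ∑ j ∈ Finset.range (N+1), β j * adjE K (N+1) j i * gg K (N+1) i := by
          intro i _
          rw [Finset.sum_mul]
        rw [Finset.sum_congr rfl e1, Finset.sum_comm]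
        apply Finset.sum_congr rfl
        intro j hj
        rw [← cramer_full K (N+1) j (Finset.mem_range.1 hj), Finset.mul_sum]
        apply Finset.sum_congr rfl
        intro i _
        ring
      have key : (xx K N)^(e+1) * f
          = xx K N * ((∑ i ∈ Finset.range (N+1), ∑ j ∈ Finset.range (N+1),
                (t j i - t i j) * ww K j N * gg K (N+1) i)
              + β N * dd K (N+1)
              + (∑ i ∈ Finset.range (N+1), atil i * gg K (N+1) i)
              + btil * dd K (N+1)) := by
        rw [ha]
        have h1 : ∀ i ∈ Finset.range (N+1), a i * gg K (N+1) i
            = sigmaX K N (a i) * gg K (N+1) i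
              + xx K N * (atil i * gg K (N+1) i) := by
          intro i _
          conv_lhs => rw [hatil i]
          ring
        have h2 : ∀ i ∈ Finset.range (N+1), sigmaX K N (a i) * gg K (N+1) i
            = (∑ j ∈ Finset.range (N+1), (t i j - t j i) * gg K N j) * gg K (N+1) i
              + (∑ j ∈ Finset.range (N+1), β j * adjE K (N+1) j i) * gg K (N+1) i := by
          intro i hi
          rw [ht i (Finset.mem_range.1 hi), add_mul]
        have h3 : ∑ i ∈ Finset.range (N+1), a i * gg K (N+1) i
            = xx K N * (∑ i ∈ Finset.range (N+1), ∑ j ∈ Finset.range (N+1),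
                  (t j i - t i j) * ww K j N * gg K (N+1) i)
              + ∑ j ∈ Finset.range (N+1), β j * (dd K (N+1) * xx K j)
              + xx K N * ∑ i ∈ Finset.range (N+1), atil i * gg K (N+1) i := by
          rw [Finset.sum_congr rfl h1, Finset.sum_add_distrib, Finset.sum_congr rfl h2,
            Finset.sum_add_distrib, koszul_prod, hmid, ← Finset.mul_sum]
          try ring
        have h4 : b * dd K (N+1)
            = (-∑ j ∈ Finset.range N, β j * xx K j) * dd K (N+1)
              + xx K N * (btil * dd K (N+1)) := by
          conv_lhs => rw [hbtil]
          rw [hbeq]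
          ring
        rw [h3, h4]
        have h5 : ∑ j ∈ Finset.range (N+1), β j * (dd K (N+1) * xx K j)
            + (-∑ j ∈ Finset.range N, β j * xx K j) * dd K (N+1)
            = xx K N * (β N * dd K (N+1)) := by
          rw [Finset.sum_range_succ]
          have e6 : ∑ j ∈ Finset.range N, β j * (dd K (N+1) * xx K j)
              = (∑ j ∈ Finset.range N, β j * xx K j) * dd K (N+1) := by
            rw [Finset.sum_mul]
            apply Finset.sum_congr rfl
            intro j _
            ring
          rw [e6]
          ring
        calc xx K N * (∑ i ∈ Finset.range (N+1), ∑ j ∈ Finset.range (N+1),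
                  (t j i - t i j) * ww K j N * gg K (N+1) i)
              + ∑ j ∈ Finset.range (N+1), β j * (dd K (N+1) * xx K j)
              + xx K N * ∑ i ∈ Finset.range (N+1), atil i * gg K (N+1) i
              + ((-∑ j ∈ Finset.range N, β j * xx K j) * dd K (N+1)
                + xx K N * (btil * dd K (N+1)))
            = xx K N * (∑ i ∈ Finset.range (N+1), ∑ j ∈ Finset.range (N+1),
                  (t j i - t i j) * ww K j N * gg K (N+1) i)
              + (∑ j ∈ Finset.range (N+1), β j * (dd K (N+1) * xx K j)
                + (-∑ j ∈ Finset.range N, β j * xx K j) * dd K (N+1))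
              + xx K N * ∑ i ∈ Finset.range (N+1), atil i * gg K (N+1) i
              + xx K N * (btil * dd K (N+1)) := by ring
          _ = _ := by rw [h5]; ring
      have hx : (xx K N) ≠ 0 := X_ne_zero _
      have hcancel : (xx K N)^e * f
          = (∑ i ∈ Finset.range (N+1), ∑ j ∈ Finset.range (N+1),
                (t j i - t i j) * ww K j N * gg K (N+1) i)
              + β N * dd K (N+1)
              + (∑ i ∈ Finset.range (N+1), atil i * gg K (N+1) i)
              + btil * dd K (N+1) := by
        apply mul_left_cancel₀ hx
        rw [← key, pow_succ]
        ring
      apply ih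
      rw [hcancel]
      have m1 : (∑ i ∈ Finset.range (N+1), ∑ j ∈ Finset.range (N+1),
          (t j i - t i j) * ww K j N * gg K (N+1) i) ∈ QQ K (N+1) :=
        II_le_QQ K (N+1) (inner_mem_II K (N+1) N t)
      have m2 : β N * dd K (N+1) ∈ QQ K (N+1) :=
        Ideal.mul_mem_left _ _ (dd_mem_QQ K (N+1))
      have m3 : (∑ i ∈ Finset.range (N+1), atil i * gg K (N+1) i) ∈ QQ K (N+1) :=
        II_le_QQ K (N+1) (sum_mem_II K atil)
      have m4 : btil * dd K (N+1) ∈ QQ K (N+1) :=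
        Ideal.mul_mem_left _ _ (dd_mem_QQ K (N+1))
      exact add_mem (add_mem (add_mem m1 m2) m3) m4

lemma psi_dd_zero (N : ℕ) : psi K (N+1) N (dd K (N+1)) = 0 := by
  set A : Matrix (Fin (N+1)) (Fin (N+1)) (DD K N) :=
    Matrix.of fun a b => psi K (N+1) N (ww K a b) with hAdef
  set vv : Fin (N+1) → DD K N := fun b => algebraMap (TT K) (DD K N) (xx K b) with hvv
  have hA : ∀ a : Fin (N+1), ∑ b : Fin (N+1),
      psi K (N+1) N (ww K a b) * algebraMap (TT K) (DD K N) (xx K b) = 0 := by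
    intro a
    have e0 : ∑ b : Fin (N+1),
        psi K (N+1) N (ww K a b) * algebraMap (TT K) (DD K N) (xx K b)
        = ∑ j ∈ Finset.range (N+1),
            psi K (N+1) N (ww K a j) * algebraMap (TT K) (DD K N) (xx K j) :=
      Fin.sum_univ_eq_sum_range
        (fun j => psi K (N+1) N (ww K a j) * algebraMap (TT K) (DD K N) (xx K j)) (N+1)
    have e1 : ∑ j ∈ Finset.range (N+1),
        psi K (N+1) N (ww K a j) * algebraMap (TT K) (DD K N) (xx K j)
        = psi K (N+1) N (gg K (N+1) a) := by
      rw [gg, map_sum]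
      apply Finset.sum_congr rfl
      intro j _
      rw [_root_.map_mul, psi_x]
    rw [e0, e1, psi_gg_row K (N+1) N a a.isLt]
  have hAv : A *ᵥ vv = 0 := by
    funext a
    simpa [Matrix.mulVec, dotProduct, hAdef, hvv] using hA a
  have h2 : A.det * algebraMap (TT K) (DD K N) (xx K N) = 0 := by
    have := det_mul_eq_zero_of_mulVec_eq_zero A vv hAv (Fin.last N)
    simpa [hvv] using this
  have hu : algebraMap (TT K) (DD K N) (xx K N)
      * IsLocalization.Away.invSelf (S := DD K N) (xx K N) = 1 :=
    IsLocalization.Away.mul_invSelf _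
  have h3 : A.det = 0 := by
    have h4 := congrArg (· * IsLocalization.Away.invSelf (S := DD K N) (xx K N)) h2
    simpa [mul_assoc, hu] using h4
  rw [hom_dd]
  exact h3

lemma QQ_eq_ker (N : ℕ)
    (HQ : ∀ b : TT K, b * gg K N N ∈ II K N N → b ∈ QQ K N) :
    QQ K (N+1) = RingHom.ker (psi K (N+1) N) := by
  apply le_antisymm
  · apply sup_le
    · rw [II, Ideal.span_le]
      rintro - ⟨i, rfl⟩
      exact psi_gg_row K (N+1) N i i.isLt
    · rw [Ideal.span_le, Set.singleton_subset_iff]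
      exact psi_dd_zero K N
  · intro f hf
    have hf0 : psi K (N+1) N f = 0 := hf
    obtain ⟨e, h, hm, halg⟩ := psi_div K (N+1) N f
    rw [hf0, mul_zero] at halg
    have h0 : h = 0 := by
      apply algebraMap_DD_injective K N
      rw [halg, map_zero]
    rw [h0, sub_zero] at hm
    exact satQ K N HQ e f (II_le_QQ K (N+1) hm)

lemma QQ_prime : ∀ N : ℕ, (QQ K (N+1)).IsPrime := by
  intro N
  have HQ : ∀ b : TT K, b * gg K N N ∈ II K N N → b ∈ QQ K N := by
    induction N with
    | zero => intro b _; rw [QQ_zero]; exact Submodule.mem_top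
    | succ N' ih =>
        have hprev : (QQ K (N'+1)).IsPrime := by
          haveI := dd_isDomain K N'
          rw [QQ_eq_ker K N' ih]
          exact RingHom.ker_isPrime _
        intro b hb
        exact (hprev.mem_or_mem (II_le_QQ K (N'+1) hb)).resolve_right
          (gg_not_mem_QQ K (Nat.succ_pos N'))
  haveI := dd_isDomain K N
  rw [QQ_eq_ker K N HQ]
  exact RingHom.ker_isPrime _

end Main
end StarLSS

open MvPolynomial

/-- The polynomial ring `T = K[x_1, …, x_{n-1}, w_{ij} : 1 ≤ i,j ≤ n-1]`:
`Sum.inl i` is the variable `x_i` and `Sum.inr (i, j)` is the variable `w_{ij}`. -/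
abbrev starPolyRing (K : Type) [Field K] (n : ℕ) :=
  MvPolynomial (Fin (n - 1) ⊕ Fin (n - 1) × Fin (n - 1)) K

/-- The generator `f_i = ∑_j w_{ij} x_j` of the LSS ideal of the `(n-1)`-star graph. -/
noncomputable def starGen (K : Type) [Field K] (n : ℕ) (i : Fin (n - 1)) :
    starPolyRing K n :=
  ∑ j : Fin (n - 1), MvPolynomial.X (Sum.inr (i, j)) * MvPolynomial.X (Sum.inl j)

/-- The ideal `I = (f_1, …, f_{n-1})`. -/
noncomputable def starIdeal (K : Type) [Field K] (n : ℕ) : Ideal (starPolyRing K n) :=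
  Ideal.span (Set.range (starGen K n))

/-- The determinant of the generic `(n-1) × (n-1)` matrix `W = (w_{ij})`. -/
noncomputable def detW (K : Type) [Field K] (n : ℕ) : starPolyRing K n :=
  Matrix.det (Matrix.of fun i j : Fin (n - 1) => MvPolynomial.X (Sum.inr (i, j)))

namespace StarLSS
open Matrix
section FinPart
variable (K : Type) [Field K] (n : ℕ)

lemma homDet {A B : Type*} [CommRing A] [CommRing B] {p : ℕ} (f : A →+* B)
    (M : Matrix (Fin p) (Fin p) A) : f M.det = (M.map f).det := by
  rw [RingHom.map_det, RingHom.mapMatrix_apply]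

lemma adj_vec {A : Type*} [CommRing A] {p : ℕ} (M : Matrix (Fin p) (Fin p) A)
    (v : Fin p → A) (j : Fin p) :
    ∑ i : Fin p, M.adjugate j i * (M *ᵥ v) i = M.det * v j := by
  have h : M.adjugate *ᵥ (M *ᵥ v) = M.det • v := by
    rw [Matrix.mulVec_mulVec, Matrix.adjugate_mul, Matrix.smul_mulVec,
      Matrix.one_mulVec]
  have h2 := congrFun h j
  simpa [Matrix.mulVec, dotProduct] using h2

lemma fin_mulVec_starGen (i : Fin (n-1)) :
    ((Matrix.of fun a b : Fin (n-1) => (X (Sum.inr (a, b)) : starPolyRing K n))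
      *ᵥ (fun j : Fin (n-1) => X (Sum.inl j))) i = starGen K n i := by
  simp only [Matrix.mulVec, dotProduct, Matrix.of_apply, starGen]

lemma fin_xdet_mem (j : Fin (n-1)) :
    detW K n * X (Sum.inl j) ∈ starIdeal K n := by
  have h := adj_vec (Matrix.of fun a b : Fin (n-1) => (X (Sum.inr (a, b)) : starPolyRing K n))
    (fun j : Fin (n-1) => X (Sum.inl j)) j
  have h2 : detW K n * X (Sum.inl j)
      = ∑ i : Fin (n-1),
          (Matrix.of fun a b : Fin (n-1) => (X (Sum.inr (a, b)) : starPolyRing K n)).adjugate j i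
            * starGen K n i := by
    rw [detW, ← h]
    apply Finset.sum_congr rfl
    intro i _
    rw [fin_mulVec_starGen]
  rw [h2]
  apply Ideal.sum_mem
  intro i _
  exact Ideal.mul_mem_left _ _ (Ideal.subset_span ⟨i, rfl⟩)

lemma fin_I_le_P : starIdeal K n
    ≤ Ideal.span (Set.range fun i : Fin (n-1) => (X (Sum.inl i) : starPolyRing K n)) := by
  rw [starIdeal, Ideal.span_le]
  rintro - ⟨i, rfl⟩
  rw [starGen]
  apply Ideal.sum_mem
  intro j _
  exact Ideal.mul_mem_left _ _ (Ideal.subset_span ⟨j, rfl⟩)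

lemma fin_P_prime :
    (Ideal.span (Set.range fun i : Fin (n-1) => (X (Sum.inl i) : starPolyRing K n))).IsPrime := by
  have hs : (Set.range fun i : Fin (n-1) => (X (Sum.inl i) : starPolyRing K n))
      = X '' Set.range (Sum.inl : Fin (n-1) → Fin (n-1) ⊕ Fin (n-1) × Fin (n-1)) := by
    rw [show (fun i : Fin (n-1) => (X (Sum.inl i) : starPolyRing K n))
        = X ∘ (Sum.inl : Fin (n-1) → Fin (n-1) ⊕ Fin (n-1) × Fin (n-1)) from rfl,
      Set.range_comp]
  rw [hs]
  exact isPrime_span_X _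

lemma fin_detW_ne_zero : detW K n ≠ 0 := by
  intro h
  have h1 : (eval (Sum.elim (fun _ => (0:K))
      (fun p => if p.1 = p.2 then 1 else 0)) : starPolyRing K n →+* K) (detW K n) = 1 := by
    rw [detW, homDet]
    have : ((Matrix.of fun a b : Fin (n-1) => (X (Sum.inr (a, b)) : starPolyRing K n)).map
        (eval (Sum.elim (fun _ => (0:K)) (fun p => if p.1 = p.2 then 1 else 0)))) = 1 := by
      refine Matrix.ext fun a b => ?_
      simp only [Matrix.map_apply, Matrix.of_apply, eval_X, Sum.elim_inr, Matrix.one_apply]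
    rw [this, Matrix.det_one]
  rw [h, map_zero] at h1
  exact zero_ne_one h1

lemma fin_detW_not_mem_P : detW K n
    ∉ Ideal.span (Set.range fun i : Fin (n-1) => (X (Sum.inl i) : starPolyRing K n)) := by
  intro h
  have hs : (Set.range fun i : Fin (n-1) => (X (Sum.inl i) : starPolyRing K n))
      = X '' Set.range (Sum.inl : Fin (n-1) → Fin (n-1) ⊕ Fin (n-1) × Fin (n-1)) := by
    rw [show (fun i : Fin (n-1) => (X (Sum.inl i) : starPolyRing K n))
        = X ∘ (Sum.inl : Fin (n-1) → Fin (n-1) ⊕ Fin (n-1) × Fin (n-1)) from rfl,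
      Set.range_comp]
  rw [hs] at h
  have h0 := killVars_eq_zero_of_mem_span _ h
  have hfix : killVars (Set.range (Sum.inl : Fin (n-1) → Fin (n-1) ⊕ Fin (n-1) × Fin (n-1)))
      (detW K n) = detW K n := by
    rw [detW, ahom_det']
    congr 1
    refine Matrix.ext fun a b => ?_
    simp only [Matrix.map_apply, Matrix.of_apply]
    exact killVars_X_not_mem _ (by simp)
  rw [hfix] at h0
  exact fin_detW_ne_zero K n h0

lemma fin_x_not_mem_Q (hm : 0 < n - 1) :
    (X (Sum.inl (⟨0, hm⟩ : Fin (n-1))) : starPolyRing K n)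
      ∉ starIdeal K n ⊔ Ideal.span {detW K n} := by
  intro h
  set evB : starPolyRing K n →+* K :=
    eval (Sum.elim (fun _ => (1:K)) (fun _ => 0)) with hevB
  have hk : starIdeal K n ⊔ Ideal.span {detW K n} ≤ RingHom.ker evB := by
    apply sup_le
    · rw [starIdeal, Ideal.span_le]
      rintro - ⟨i, rfl⟩
      have : evB (starGen K n i) = 0 := by
        rw [starGen, map_sum]
        apply Finset.sum_eq_zero
        intro j _
        simp [hevB]
      exact this
    · rw [Ideal.span_le, Set.singleton_subset_iff]
      have : evB (detW K n) = 0 := by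
        rw [detW, homDet]
        have hzero : ((Matrix.of fun a b : Fin (n-1) =>
            (X (Sum.inr (a, b)) : starPolyRing K n)).map evB) = 0 := by
          refine Matrix.ext fun a b => ?_
          simp [hevB]
        rw [hzero]
        exact (haveI : Nonempty (Fin (n-1)) := ⟨⟨0, hm⟩⟩; Matrix.det_zero)
      exact this
  have h1 : evB (X (Sum.inl (⟨0, hm⟩ : Fin (n-1)))) = 0 := hk h
  rw [hevB] at h1
  simp only [eval_X, Sum.elim_inl] at h1
  exact one_ne_zero h1

lemma fin_Q_prime (hm : 0 < n - 1) :
    (starIdeal K n ⊔ Ideal.span {detW K n}).IsPrime := by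
  set ι : starPolyRing K n →ₐ[K] TT K :=
    rename (Sum.map Fin.val (fun p => (p.1.val, p.2.val))) with hι
  have hgen : ∀ i : Fin (n-1), ι (starGen K n i) = gg K (n-1) i.val := by
    intro i
    rw [starGen, map_sum]
    have e0 : ∀ j : Fin (n-1), ι (X (Sum.inr (i, j)) * X (Sum.inl j))
        = ww K i.val j.val * xx K j.val := by
      intro j
      rw [_root_.map_mul, hι, rename_X, rename_X]
      rfl
    rw [Finset.sum_congr rfl (fun j _ => e0 j)]
    exact Fin.sum_univ_eq_sum_range (fun j => ww K i.val j * xx K j) (n-1)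
  have hdet : ι (detW K n) = dd K (n-1) := by
    rw [detW, ahom_det']
    simp only [dd]
    congr 1
    refine Matrix.ext fun a b => ?_
    simp only [Matrix.map_apply, Matrix.of_apply, hι, rename_X]
    rfl
  set π : TT K →ₐ[K] starPolyRing K n :=
    aeval (Sum.elim
      (fun j => if h : j < n-1 then X (Sum.inl (⟨j, h⟩ : Fin (n-1))) else 0)
      (fun p => if h : p.1 < n-1 ∧ p.2 < n-1
        then X (Sum.inr ((⟨p.1, h.1⟩ : Fin (n-1)), (⟨p.2, h.2⟩ : Fin (n-1)))) else 0))
    with hπ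
  have hcomp : ∀ f : starPolyRing K n, π (ι f) = f := by
    have hco : (π.comp ι) = AlgHom.id K (starPolyRing K n) := by
      apply MvPolynomial.algHom_ext
      intro v
      rcases v with j | ⟨i, j⟩
      · rw [AlgHom.comp_apply, hι, rename_X, hπ, aeval_X, AlgHom.id_apply]
        show (if h : (j : ℕ) < n-1 then (X (Sum.inl (⟨j, h⟩ : Fin (n-1))) : starPolyRing K n)
          else 0) = X (Sum.inl j)
        rw [dif_pos j.isLt]
      · rw [AlgHom.comp_apply, hι, rename_X, hπ, aeval_X, AlgHom.id_apply]
        show (if h : (i : ℕ) < n-1 ∧ (j : ℕ) < n-1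
          then (X (Sum.inr ((⟨i, h.1⟩ : Fin (n-1)), (⟨j, h.2⟩ : Fin (n-1)))) : starPolyRing K n)
          else 0) = X (Sum.inr (i, j))
        rw [dif_pos ⟨i.isLt, j.isLt⟩]
    intro f
    have := DFunLike.congr_fun hco f
    simpa using this
  have hπdd : π (dd K (n-1)) = detW K n := by
    rw [← hdet, hcomp]
  have hQf_eq : starIdeal K n ⊔ Ideal.span {detW K n}
      = Ideal.comap ι.toRingHom (QQ K (n-1)) := by
    apply le_antisymm
    · apply sup_le
      · rw [starIdeal, Ideal.span_le]
        rintro - ⟨i, rfl⟩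
        show ι (starGen K n i) ∈ QQ K (n-1)
        rw [hgen]
        exact II_le_QQ K (n-1) (gg_mem_II K i.isLt)
      · rw [Ideal.span_le, Set.singleton_subset_iff]
        show ι (detW K n) ∈ QQ K (n-1)
        rw [hdet]
        exact dd_mem_QQ K (n-1)
    · intro f hf
      have hf' : ι f ∈ QQ K (n-1) := hf
      have hQπ : QQ K (n-1) ≤ Ideal.comap π.toRingHom
          (starIdeal K n ⊔ Ideal.span {detW K n}) := by
        apply sup_le
        · rw [II, Ideal.span_le]
          rintro - ⟨i, rfl⟩
          simp only [SetLike.mem_coe, Ideal.mem_comap]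
          show π (gg K (n-1) i.val) ∈ _
          rw [← hgen i, hcomp]
          exact Ideal.mem_sup_left (Ideal.subset_span ⟨i, rfl⟩)
        · rw [Ideal.span_le, Set.singleton_subset_iff]
          simp only [SetLike.mem_coe, Ideal.mem_comap]
          show π (dd K (n-1)) ∈ _
          rw [hπdd]
          exact Ideal.mem_sup_right (Ideal.mem_span_singleton_self _)
      have h2 : π (ι f) ∈ starIdeal K n ⊔ Ideal.span {detW K n} := hQπ hf'
      rwa [hcomp f] at h2
  rw [hQf_eq]
  obtain ⟨N, hN⟩ : ∃ N, n - 1 = N + 1 := ⟨n - 2, by omega⟩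
  haveI : (QQ K (n-1)).IsPrime := hN ▸ QQ_prime K N
  exact Ideal.IsPrime.comap _

end FinPart
end StarLSS

/-- For `n ≥ 2` and the ideal `I = (f_1, …, f_{n-1})` with `f_i = ∑_j w_{ij} x_j`:
`I = (x_1, …, x_{n-1}) ∩ (I + (det W))`, both `(x_1, …, x_{n-1})` and `I + (det W)` are
prime, and the minimal primes of `I` are exactly these two ideals. -/
theorem star_lss_minimal_primes (K : Type) [Field K] (n : ℕ) (hn : 2 ≤ n) :
    starIdeal K n =
        Ideal.span (Set.range fun i : Fin (n - 1) =>
          (MvPolynomial.X (Sum.inl i) : starPolyRing K n)) ⊓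
          (starIdeal K n ⊔ Ideal.span {detW K n}) ∧
      (Ideal.span (Set.range fun i : Fin (n - 1) =>
        (MvPolynomial.X (Sum.inl i) : starPolyRing K n))).IsPrime ∧
      (starIdeal K n ⊔ Ideal.span {detW K n}).IsPrime ∧
      (starIdeal K n).minimalPrimes =
        {Ideal.span (Set.range fun i : Fin (n - 1) =>
          (MvPolynomial.X (Sum.inl i) : starPolyRing K n)),
         starIdeal K n ⊔ Ideal.span {detW K n}} := by
  have hm : 0 < n - 1 := by omega
  set P : Ideal (starPolyRing K n) :=
    Ideal.span (Set.range fun i : Fin (n - 1) =>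
      (MvPolynomial.X (Sum.inl i) : starPolyRing K n)) with hPdef
  set Q : Ideal (starPolyRing K n) := starIdeal K n ⊔ Ideal.span {detW K n} with hQdef
  have hPprime : P.IsPrime := StarLSS.fin_P_prime K n
  have hQprime : Q.IsPrime := StarLSS.fin_Q_prime K n hm
  have hIP : starIdeal K n ≤ P := StarLSS.fin_I_le_P K n
  have hdP : detW K n ∉ P := StarLSS.fin_detW_not_mem_P K n
  have hIQ : starIdeal K n ≤ Q := le_sup_left
  have hdQ : detW K n ∈ Q := Ideal.mem_sup_right (Ideal.mem_span_singleton_self _)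
  have hx0P : (MvPolynomial.X (Sum.inl (⟨0, hm⟩ : Fin (n-1))) : starPolyRing K n) ∈ P :=
    Ideal.subset_span ⟨⟨0, hm⟩, rfl⟩
  have hx0Q : (MvPolynomial.X (Sum.inl (⟨0, hm⟩ : Fin (n-1))) : starPolyRing K n) ∉ Q :=
    StarLSS.fin_x_not_mem_Q K n hm
  have heq : starIdeal K n = P ⊓ Q := by
    apply le_antisymm (le_inf hIP hIQ)
    intro f hf
    have hfP : f ∈ P := (Submodule.mem_inf.1 hf).1
    have hfQ : f ∈ Q := (Submodule.mem_inf.1 hf).2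
    obtain ⟨y, hy, z, hz, rfl⟩ := Submodule.mem_sup.1 hfQ
    obtain ⟨cc, rfl⟩ := Ideal.mem_span_singleton'.1 hz
    have hcd : cc * detW K n ∈ P := by
      have h1 : cc * detW K n = (y + cc * detW K n) - y := by ring
      rw [h1]
      exact sub_mem hfP (hIP hy)
    have hcP : cc ∈ P := (hPprime.mem_or_mem hcd).resolve_right hdP
    rw [hPdef] at hcP
    obtain ⟨γ, hγ⟩ := Ideal.mem_span_range_iff_exists_fun.1 hcP
    have hcdI : cc * detW K n ∈ starIdeal K n := by
      rw [← hγ, Finset.sum_mul]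
      apply Ideal.sum_mem
      intro j _
      have h2 : γ j * MvPolynomial.X (Sum.inl j) * detW K n
          = γ j * (detW K n * MvPolynomial.X (Sum.inl j)) := by ring
      rw [h2]
      exact Ideal.mul_mem_left _ _ (StarLSS.fin_xdet_mem K n j)
    exact Ideal.add_mem _ hy hcdI
  refine ⟨heq, hPprime, hQprime, ?_⟩
  ext p
  simp only [Ideal.minimalPrimes, Set.mem_setOf_eq, Set.mem_insert_iff,
    Set.mem_singleton_iff]
  constructor
  · rintro ⟨⟨hp, hIp⟩, hmin⟩
    rw [heq] at hIp
    rcases (Ideal.IsPrime.inf_le hp).1 hIp with hPp | hQp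
    · left
      exact le_antisymm (hmin ⟨hPprime, hIP⟩ hPp) hPp
    · right
      exact le_antisymm (hmin ⟨hQprime, hIQ⟩ hQp) hQp
  · rintro (rfl | rfl)
    · refine ⟨⟨hPprime, hIP⟩, ?_⟩
      rintro q ⟨hq, hIq⟩ hqP
      rw [heq] at hIq
      rcases (Ideal.IsPrime.inf_le hq).1 hIq with h | h
      · exact h
      · exact absurd (hqP (h hdQ)) hdP
    · refine ⟨⟨hQprime, hIQ⟩, ?_⟩
      rintro q ⟨hq, hIq⟩ hqQ
      rw [heq] at hIq
      rcases (Ideal.IsPrime.inf_le hq).1 hIq with h | h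
      · exact absurd (hqQ (h hx0P)) hx0Q
      · exact h
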